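/- Let c₀ ≥ 0, c₁ ≥ 0, γ > 1, and a ≥ γ be constants, and let (u_t)_{t≥0} be a sequence of non-negative reals such that u_{t+1} ≤ c₀/(t + a) + c₁/(t + a)² + (1 − γ/(t + a)) u_t for all t ≥ 0. Then for all t ≥ 0, u_{t+1} ≤ [u₀ a^γ + c₁(a^{γ−2} + 1)(1 + a^{−1})^γ + c₀(1 + a^{−1})^γ a^{γ−1}]/(t + a)^γ + [c₀ + c₁(1 + a^{−1})^γ (γ − 1)^{−1}]/(t + a) + c₁/(t + a)² + γ^{−1}(1 + a^{−1})^γ c₀. -/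

import Mathlib

/-- Lemma 10 of the paper: general error recurrence.
Let `c₀, c₁ ≥ 0`, `γ > 1`, `a ≥ γ`, and let `(u_t)` be non-negative reals with
`u_{t+1} ≤ c₀/(t+a) + c₁/(t+a)² + (1 − γ/(t+a))u_t` for all `t ≥ 0`. Then for all `t ≥ 0`,
`u_{t+1} ≤ [u₀a^γ + c₁(a^{γ−2}+1)(1+a⁻¹)^γ + c₀(1+a⁻¹)^γ a^{γ−1}]/(t+a)^γ
  + [c₀ + c₁(1+a⁻¹)^γ(γ−1)⁻¹]/(t+a) + c₁/(t+a)² + γ⁻¹(1+a⁻¹)^γ c₀`. -/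
theorem stmt16 (c₀ c₁ γ a : ℝ) (hc₀ : 0 ≤ c₀) (hc₁ : 0 ≤ c₁) (hγ : 1 < γ) (ha : γ ≤ a)
    (u : ℕ → ℝ) (hu : ∀ t, 0 ≤ u t)
    (hrec : ∀ t : ℕ, u (t + 1)
      ≤ c₀ / ((t : ℝ) + a) + c₁ / ((t : ℝ) + a) ^ 2 + (1 - γ / ((t : ℝ) + a)) * u t) :
    ∀ t : ℕ, u (t + 1)
      ≤ (u 0 * a ^ γ + c₁ * (a ^ (γ - 2) + 1) * (1 + a⁻¹) ^ γ
            + c₀ * (1 + a⁻¹) ^ γ * a ^ (γ - 1)) / ((t : ℝ) + a) ^ γ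
        + (c₀ + c₁ * (1 + a⁻¹) ^ γ * (γ - 1)⁻¹) / ((t : ℝ) + a)
        + c₁ / ((t : ℝ) + a) ^ 2
        + γ⁻¹ * (1 + a⁻¹) ^ γ * c₀ := by
  have ha1 : (1:ℝ) < a := lt_of_lt_of_le hγ ha
  have hapos : (0:ℝ) < a := by linarith
  set K := (1 + a⁻¹) ^ γ with hK
  have hK1 : (1:ℝ) ≤ K := by
    rw [hK]
    calc (1:ℝ) = 1 ^ γ := (Real.one_rpow γ).symm
      _ ≤ (1 + a⁻¹) ^ γ := by
          apply Real.rpow_le_rpow zero_le_one _ (by linarith)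
          have : 0 < a⁻¹ := inv_pos.mpr hapos
          linarith
  set A := u 0 * a ^ γ + c₁ * (a ^ (γ - 2) + 1) * K + c₀ * K * a ^ (γ - 1) with hA
  set B := c₀ + c₁ * K * (γ - 1)⁻¹ with hB
  set C := γ⁻¹ * K * c₀ with hC
  have hγ1 : (0:ℝ) < γ - 1 := by linarith
  have hA0 : 0 ≤ A := by
    have h1 : 0 ≤ a ^ γ := Real.rpow_nonneg hapos.le γ
    have h2 : 0 ≤ a ^ (γ - 2) := Real.rpow_nonneg hapos.le _
    have h3 : 0 ≤ a ^ (γ - 1) := Real.rpow_nonneg hapos.le _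
    have h4 := hu 0
    rw [hA]
    have hK0 : (0:ℝ) ≤ K := by linarith
    positivity
  have hB0 : 0 ≤ B := by
    rw [hB]
    have : 0 ≤ (γ - 1)⁻¹ := by positivity
    have hK0 : (0:ℝ) ≤ K := by linarith
    positivity
  have hC0 : 0 ≤ C := by
    rw [hC]
    have hK0 : (0:ℝ) ≤ K := by linarith
    positivity
  -- key constant inequalities
  have h1 : c₀ ≤ γ * C := by
    have hγ0 : γ ≠ 0 := by linarith
    have hγ0 : γ * γ⁻¹ = 1 := mul_inv_cancel₀ (by linarith)
    have he : γ * C = K * c₀ := by rw [hC]; rw [show γ * (γ⁻¹ * K * c₀) = γ * γ⁻¹ * (K * c₀) by ring, hγ0, one_mul]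
    nlinarith [he, mul_le_mul_of_nonneg_right hK1 hc₀]
  have h2 : c₁ ≤ B * (γ - 1) := by
    have hBe : B * (γ - 1) = c₀ * (γ - 1) + c₁ * K := by
      rw [hB]; field_simp
    nlinarith [hBe, mul_nonneg hc₀ hγ1.le, mul_le_mul_of_nonneg_left hK1 hc₁]
  clear_value K A B C
  -- the inductive step inequality
  have step : ∀ x : ℝ, a ≤ x →
      c₀ / (x + 1) + c₁ / (x + 1) ^ 2
          + (1 - γ / (x + 1)) * (A / x ^ γ + B / x + c₁ / x ^ 2 + C)
        ≤ A / (x + 1) ^ γ + B / (x + 1) + c₁ / (x + 1) ^ 2 + C := by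
    intro x hx
    have hx0 : (0:ℝ) < x := lt_of_lt_of_le hapos hx
    have hy0 : (0:ℝ) < x + 1 := by linarith
    have hγy : γ ≤ x + 1 := by linarith
    have hfac : 0 ≤ 1 - γ / (x + 1) := by
      rw [sub_nonneg, div_le_one hy0]; exact hγy
    -- rpow part via Bernoulli
    have hA1 : (1 - γ / (x + 1)) * (A / x ^ γ) ≤ A / (x + 1) ^ γ := by
      have hs : (-1:ℝ) ≤ -(x + 1)⁻¹ := by
        have : (x + 1)⁻¹ ≤ 1 := by
          rw [inv_le_one_iff₀]; right; linarith
        linarith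
      have hb := one_add_mul_self_le_rpow_one_add hs hγ.le
      have he : (1 + -(x+1)⁻¹) = x / (x + 1) := by field_simp; ring
      have hb' : 1 - γ / (x + 1) ≤ (x / (x + 1)) ^ γ := by
        rw [← he]
        calc 1 - γ / (x+1) = 1 + γ * -(x+1)⁻¹ := by rw [div_eq_mul_inv]; ring
          _ ≤ _ := hb
      have hdiv : (x / (x + 1)) ^ γ = x ^ γ / (x + 1) ^ γ :=
        Real.div_rpow hx0.le hy0.le γ
      have hxγ : (0:ℝ) < x ^ γ := Real.rpow_pos_of_pos hx0 γ
      have hyγ : (0:ℝ) < (x + 1) ^ γ := Real.rpow_pos_of_pos hy0 γ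
      have hA2 : 0 ≤ A / x ^ γ := div_nonneg hA0 hxγ.le
      calc (1 - γ / (x + 1)) * (A / x ^ γ)
          ≤ (x ^ γ / (x + 1) ^ γ) * (A / x ^ γ) := by
            apply mul_le_mul_of_nonneg_right _ hA2
            rw [← hdiv]; exact hb'
        _ = A / (x + 1) ^ γ := by field_simp
    -- elementary part
    have key : c₀ / (x + 1) + (1 - γ / (x + 1)) * (B / x + c₁ / x ^ 2 + C)
        ≤ B / (x + 1) + C := by
      have hxne : x ≠ 0 := hx0.ne'
      have hyne : x + 1 ≠ 0 := hy0.ne'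
      have hnum : 0 ≤ (γ * C - c₀) * x ^ 2 + (B * (γ - 1) - c₁) * x + c₁ * (γ - 1) := by
        nlinarith
      have e : B / (x + 1) + C - (c₀ / (x + 1) + (1 - γ / (x + 1)) * (B / x + c₁ / x ^ 2 + C))
          = ((γ * C - c₀) * x ^ 2 + (B * (γ - 1) - c₁) * x + c₁ * (γ - 1)) / (x ^ 2 * (x + 1)) := by
        field_simp
        ring
      have : 0 ≤ B / (x + 1) + C - (c₀ / (x + 1) + (1 - γ / (x + 1)) * (B / x + c₁ / x ^ 2 + C)) := by
        rw [e]
        positivity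
      linarith
    have expand : (1 - γ / (x + 1)) * (A / x ^ γ + B / x + c₁ / x ^ 2 + C)
        = (1 - γ / (x + 1)) * (A / x ^ γ) + (1 - γ / (x + 1)) * (B / x + c₁ / x ^ 2 + C) := by
      ring
    rw [expand]
    linarith
  -- main induction
  intro t
  induction t with
  | zero =>
      have h0 := hrec 0
      simp only [Nat.cast_zero, zero_add] at h0 ⊢
      have haγ : (0:ℝ) < a ^ γ := Real.rpow_pos_of_pos hapos γ
      have hu0 : (1 - γ / a) * u 0 ≤ A / a ^ γ := by
        have e1 : (1 - γ / a) * u 0 ≤ u 0 := by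
          have : γ / a ≥ 0 := by positivity
          nlinarith [hu 0]
        have e2 : u 0 ≤ A / a ^ γ := by
          rw [le_div_iff₀ haγ]
          have hK0 : (0:ℝ) ≤ K := by linarith
          have hp2 : (0:ℝ) ≤ a ^ (γ - 2) := Real.rpow_nonneg hapos.le _
          have hp1 : (0:ℝ) ≤ a ^ (γ - 1) := Real.rpow_nonneg hapos.le _
          have h3 : 0 ≤ c₁ * (a ^ (γ - 2) + 1) * K := by positivity
          have h4 : 0 ≤ c₀ * K * a ^ (γ - 1) := by positivity
          rw [hA]; linarith
        linarith
      have hc : c₀ / a ≤ B / a := by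
        have hK0 : (0:ℝ) ≤ K := by linarith
        have h5 : 0 ≤ c₁ * K * (γ - 1)⁻¹ := by positivity
        gcongr
        rw [hB]; linarith
      linarith
  | succ t ih =>
      have hr := hrec (t + 1)
      push_cast at hr ⊢
      have hx : a ≤ (t:ℝ) + a := by
        have : (0:ℝ) ≤ (t:ℝ) := Nat.cast_nonneg t
        linarith
      have hy0 : (0:ℝ) < (t:ℝ) + a + 1 := by linarith
      have hfac : 0 ≤ 1 - γ / ((t:ℝ) + 1 + a) := by
        rw [sub_nonneg, div_le_one (by linarith)]
        linarith
      have hmono : (1 - γ / ((t:ℝ) + 1 + a)) * u (t + 1)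
          ≤ (1 - γ / ((t:ℝ) + 1 + a)) * (A / ((t:ℝ) + a) ^ γ + B / ((t:ℝ) + a)
              + c₁ / ((t:ℝ) + a) ^ 2 + C) :=
        mul_le_mul_of_nonneg_left ih hfac
      have hstep := step ((t:ℝ) + a) hx
      have e : (t:ℝ) + 1 + a = ((t:ℝ) + a) + 1 := by ring
      rw [e] at hr hmono ⊢
      linarith
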